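/- Let f₁, …, f_T be L-Lipschitz (in each block variable) functions, and for each t let (u*_{t+1}, v*_{t+1}) be a saddle point of J_t = (1/t)Σ_{i=1}^t f_i, i.e., J_t(u*_{t+1}, y) ≤ J_t(u*_{t+1}, v*_{t+1}) ≤ J_t(x, v*_{t+1}) for all x, y. Then for any sequence of points (x_{t+1}, y_{t+1}), |Σ_{t=1}^T f_t(x_{t+1}, y_{t+1}) − Σ_{t=1}^T f_t(u*_{T+1}, v*_{T+1})| ≤ L·Σ_{t=1}^T (‖u*_t − u*_{t+1}‖ + ‖v*_t − v*_{t+1}‖ + ‖v*_{t+1} − y_{t+1}‖ + ‖u*_{t+1} − x_{t+1}‖). -/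

import Mathlib

open Finset

/-- Upper bound: follow-the-leader sum vs leader, controlled by v-drift. -/
lemma btl_upper {dX dY : ℕ} (N : ℕ)
    (f : ℕ → EuclideanSpace ℝ (Fin dX) → EuclideanSpace ℝ (Fin dY) → ℝ)
    (L : ℝ)
    (u : ℕ → EuclideanSpace ℝ (Fin dX)) (v : ℕ → EuclideanSpace ℝ (Fin dY))
    (hLipY : ∀ t, 1 ≤ t → t ≤ N → ∀ x y₁ y₂, |f t x y₁ - f t x y₂| ≤ L * ‖y₁ - y₂‖)
    (hS1 : ∀ t, 1 ≤ t → t ≤ N → ∀ y,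
      ∑ i ∈ Icc 1 t, f i (u (t+1)) y ≤ ∑ i ∈ Icc 1 t, f i (u (t+1)) (v (t+1)))
    (hS2 : ∀ t, 1 ≤ t → t ≤ N → ∀ x,
      ∑ i ∈ Icc 1 t, f i (u (t+1)) (v (t+1)) ≤ ∑ i ∈ Icc 1 t, f i x (v (t+1))) :
    ∀ T, T ≤ N →
      ∑ t ∈ Icc 1 T, f t (u (t+1)) (v (t+1))
        ≤ ∑ t ∈ Icc 1 T, f t (u (T+1)) (v (T+1)) + L * ∑ t ∈ Icc 1 T, ‖v t - v (t+1)‖ := by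
  intro T
  induction T with
  | zero => intro _; simp
  | succ n ih =>
    intro hT
    have hn : n ≤ N := Nat.le_of_succ_le hT
    have ih' := ih hn
    have h1 : 1 ≤ n + 1 := Nat.succ_le_succ n.zero_le
    rw [Finset.sum_Icc_succ_top h1, Finset.sum_Icc_succ_top h1, Finset.sum_Icc_succ_top h1]
    -- B_n ≤ ∑_{t≤n} f t (u (n+2)) (v (n+1))
    have step1 : ∑ t ∈ Icc 1 n, f t (u (n+1)) (v (n+1))
        ≤ ∑ t ∈ Icc 1 n, f t (u (n+2)) (v (n+1)) := by
      rcases Nat.eq_zero_or_pos n with h | h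
      · subst h; simp
      · exact hS2 n h hn (u (n+2))
    -- ∑_{t≤n+1} f t (u (n+2)) (v (n+1)) ≤ ∑_{t≤n+1} f t (u (n+2)) (v (n+2))
    have step2 : ∑ t ∈ Icc 1 (n+1), f t (u (n+2)) (v (n+1))
        ≤ ∑ t ∈ Icc 1 (n+1), f t (u (n+2)) (v (n+2)) := hS1 (n+1) h1 hT (v (n+1))
    rw [Finset.sum_Icc_succ_top h1, Finset.sum_Icc_succ_top h1] at step2
    -- Lipschitz in y at t = n+1
    have lip : f (n+1) (u (n+2)) (v (n+2)) - f (n+1) (u (n+2)) (v (n+1))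
        ≤ L * ‖v (n+1) - v (n+2)‖ := by
      have h := hLipY (n+1) h1 hT (u (n+2)) (v (n+2)) (v (n+1))
      rw [norm_sub_rev] at h
      linarith [(abs_le.mp h).2]
    linarith

/-- Lower bound: controlled by u-drift. -/
lemma btl_lower {dX dY : ℕ} (N : ℕ)
    (f : ℕ → EuclideanSpace ℝ (Fin dX) → EuclideanSpace ℝ (Fin dY) → ℝ)
    (L : ℝ)
    (u : ℕ → EuclideanSpace ℝ (Fin dX)) (v : ℕ → EuclideanSpace ℝ (Fin dY))
    (hLipX : ∀ t, 1 ≤ t → t ≤ N → ∀ x₁ x₂ y, |f t x₁ y - f t x₂ y| ≤ L * ‖x₁ - x₂‖)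
    (hS1 : ∀ t, 1 ≤ t → t ≤ N → ∀ y,
      ∑ i ∈ Icc 1 t, f i (u (t+1)) y ≤ ∑ i ∈ Icc 1 t, f i (u (t+1)) (v (t+1)))
    (hS2 : ∀ t, 1 ≤ t → t ≤ N → ∀ x,
      ∑ i ∈ Icc 1 t, f i (u (t+1)) (v (t+1)) ≤ ∑ i ∈ Icc 1 t, f i x (v (t+1))) :
    ∀ T, T ≤ N →
      ∑ t ∈ Icc 1 T, f t (u (T+1)) (v (T+1)) - L * ∑ t ∈ Icc 1 T, ‖u t - u (t+1)‖
        ≤ ∑ t ∈ Icc 1 T, f t (u (t+1)) (v (t+1)) := by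
  intro T
  induction T with
  | zero => intro _; simp
  | succ n ih =>
    intro hT
    have hn : n ≤ N := Nat.le_of_succ_le hT
    have ih' := ih hn
    have h1 : 1 ≤ n + 1 := Nat.succ_le_succ n.zero_le
    rw [Finset.sum_Icc_succ_top h1, Finset.sum_Icc_succ_top h1, Finset.sum_Icc_succ_top h1]
    have step1 : ∑ t ∈ Icc 1 n, f t (u (n+1)) (v (n+2))
        ≤ ∑ t ∈ Icc 1 n, f t (u (n+1)) (v (n+1)) := by
      rcases Nat.eq_zero_or_pos n with h | h
      · subst h; simp
      · exact hS1 n h hn (v (n+2))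
    have step2 : ∑ t ∈ Icc 1 (n+1), f t (u (n+2)) (v (n+2))
        ≤ ∑ t ∈ Icc 1 (n+1), f t (u (n+1)) (v (n+2)) := hS2 (n+1) h1 hT (u (n+1))
    rw [Finset.sum_Icc_succ_top h1, Finset.sum_Icc_succ_top h1] at step2
    have lip : f (n+1) (u (n+1)) (v (n+2)) - f (n+1) (u (n+2)) (v (n+2))
        ≤ L * ‖u (n+1) - u (n+2)‖ := by
      have := hLipX (n+1) h1 hT (u (n+1)) (u (n+2)) (v (n+2))
      rw [abs_le] at this
      linarith [this.2]
    linarith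

/-- be-the-leader lemma: for any sequence of played points,
the comparison with the saddle point `(u (T+1), v (T+1))` of `J T` is controlled
by the drifts of the saddle points and the distance of the iterates to them. -/
theorem stmt2 {dX dY : ℕ} (T : ℕ)
    (f : ℕ → EuclideanSpace ℝ (Fin dX) → EuclideanSpace ℝ (Fin dY) → ℝ)
    (L : ℝ) (hL : 0 < L)
    (hLipX : ∀ t, 1 ≤ t → t ≤ T → ∀ x₁ x₂ y, |f t x₁ y - f t x₂ y| ≤ L * ‖x₁ - x₂‖)
    (hLipY : ∀ t, 1 ≤ t → t ≤ T → ∀ x y₁ y₂, |f t x y₁ - f t x y₂| ≤ L * ‖y₁ - y₂‖)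
    (J : ℕ → EuclideanSpace ℝ (Fin dX) → EuclideanSpace ℝ (Fin dY) → ℝ)
    (hJ : ∀ t x y, J t x y = (1 / (t : ℝ)) * ∑ i ∈ Finset.Icc 1 t, f i x y)
    (u : ℕ → EuclideanSpace ℝ (Fin dX)) (v : ℕ → EuclideanSpace ℝ (Fin dY))
    (hsaddle : ∀ t, 1 ≤ t → t ≤ T → ∀ x y,
      J t (u (t+1)) y ≤ J t (u (t+1)) (v (t+1)) ∧
      J t (u (t+1)) (v (t+1)) ≤ J t x (v (t+1)))
    (x : ℕ → EuclideanSpace ℝ (Fin dX)) (y : ℕ → EuclideanSpace ℝ (Fin dY)) :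
    |∑ t ∈ Finset.Icc 1 T, f t (x (t+1)) (y (t+1))
        - ∑ t ∈ Finset.Icc 1 T, f t (u (T+1)) (v (T+1))|
      ≤ L * ∑ t ∈ Finset.Icc 1 T,
          (‖u t - u (t+1)‖ + ‖v t - v (t+1)‖
            + ‖v (t+1) - y (t+1)‖ + ‖u (t+1) - x (t+1)‖) := by
  -- de-normalized saddle inequalities
  have hpos : ∀ t : ℕ, 1 ≤ t → (0 : ℝ) < 1 / (t : ℝ) := fun t ht =>
    one_div_pos.mpr (by exact_mod_cast Nat.pos_of_ne_zero (by omega))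
  have hS1 : ∀ t, 1 ≤ t → t ≤ T → ∀ y',
      ∑ i ∈ Finset.Icc 1 t, f i (u (t+1)) y'
        ≤ ∑ i ∈ Finset.Icc 1 t, f i (u (t+1)) (v (t+1)) := by
    intro t h1 h2 y'
    have h := (hsaddle t h1 h2 (u (t+1)) y').1
    rw [hJ, hJ] at h
    exact (mul_le_mul_iff_right₀ (hpos t h1)).mp h
  have hS2 : ∀ t, 1 ≤ t → t ≤ T → ∀ x',
      ∑ i ∈ Finset.Icc 1 t, f i (u (t+1)) (v (t+1))
        ≤ ∑ i ∈ Finset.Icc 1 t, f i x' (v (t+1)) := by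
    intro t h1 h2 x'
    have h := (hsaddle t h1 h2 x' (v (t+1))).2
    rw [hJ, hJ] at h
    exact (mul_le_mul_iff_right₀ (hpos t h1)).mp h
  have hub := btl_upper T f L u v hLipY hS1 hS2 T le_rfl
  have hlb := btl_lower T f L u v hLipX hS1 hS2 T le_rfl
  -- pointwise comparison of played points with the current saddle point
  have habs : |∑ t ∈ Finset.Icc 1 T,
        (f t (x (t+1)) (y (t+1)) - f t (u (t+1)) (v (t+1)))|
      ≤ ∑ t ∈ Finset.Icc 1 T,
        (L * ‖v (t+1) - y (t+1)‖ + L * ‖u (t+1) - x (t+1)‖) := by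
    refine (Finset.abs_sum_le_sum_abs _ _).trans (Finset.sum_le_sum ?_)
    intro t ht
    rw [Finset.mem_Icc] at ht
    have hx := hLipX t ht.1 ht.2 (x (t+1)) (u (t+1)) (y (t+1))
    have hy := hLipY t ht.1 ht.2 (u (t+1)) (y (t+1)) (v (t+1))
    rw [norm_sub_rev] at hx hy
    calc |f t (x (t+1)) (y (t+1)) - f t (u (t+1)) (v (t+1))|
        ≤ |f t (x (t+1)) (y (t+1)) - f t (u (t+1)) (y (t+1))|
            + |f t (u (t+1)) (y (t+1)) - f t (u (t+1)) (v (t+1))| := abs_sub_le _ _ _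
      _ ≤ L * ‖v (t+1) - y (t+1)‖ + L * ‖u (t+1) - x (t+1)‖ := by linarith
  rw [Finset.sum_sub_distrib] at habs
  have hsplit : L * ∑ t ∈ Finset.Icc 1 T,
        (‖u t - u (t+1)‖ + ‖v t - v (t+1)‖ + ‖v (t+1) - y (t+1)‖ + ‖u (t+1) - x (t+1)‖)
      = L * ∑ t ∈ Finset.Icc 1 T, ‖u t - u (t+1)‖
        + L * ∑ t ∈ Finset.Icc 1 T, ‖v t - v (t+1)‖
        + ∑ t ∈ Finset.Icc 1 T,
            (L * ‖v (t+1) - y (t+1)‖ + L * ‖u (t+1) - x (t+1)‖) := by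
    simp only [Finset.sum_add_distrib, mul_add, Finset.mul_sum]
    ring
  have hnn1 : 0 ≤ L * ∑ t ∈ Finset.Icc 1 T, ‖u t - u (t+1)‖ := by positivity
  have hnn2 : 0 ≤ L * ∑ t ∈ Finset.Icc 1 T, ‖v t - v (t+1)‖ := by positivity
  have habs' := abs_le.mp habs
  rw [abs_le]
  constructor <;> [skip; skip] <;> linarith [habs'.1, habs'.2]
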